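/- Let A = (a_{ij}) be an n×n integer matrix with a_{jj} = 1 for all j and such that every principal minor of A equals ±1. Let ε_{ji} (1 ≤ i < j ≤ n) be integers and f_j = ∑_{i<j} ε_{ji}·x_i. If there exists a ring isomorphism between ℤ[x₁,…,x_n]/⟨x_j(x_j − f_j) : j⟩ and R_A = ℤ[y₁,…,y_n]/⟨y_j·(∑_{i=1}^n a_{ji}·y_i) : j⟩ carrying the ℤ-span of the generators x₁,…,x_n onto the ℤ-span of the generators y₁,…,y_n, then every principal minor of A equals 1. -/

import Mathlib

open MvPolynomial

/-- `f j = ∑_{i < j} ε j i • x i`, the twisting class of the `j`-th stage. -/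
noncomputable def bottF (n : ℕ) (ε : Fin n → Fin n → ℤ) (j : Fin n) :
    MvPolynomial (Fin n) ℤ :=
  ∑ i : Fin n, if i < j then C (ε j i) * X i else 0

/-- The defining ideal `⟨x_j (x_j - f_j) : j⟩` of the Bott ring. -/
noncomputable def bottIdeal (n : ℕ) (ε : Fin n → Fin n → ℤ) :
    Ideal (MvPolynomial (Fin n) ℤ) :=
  Ideal.span (Set.range fun j : Fin n => X j * (X j - bottF n ε j))

/-- The defining ideal `⟨y_j · (∑ i, a_{ji} y_i) : j⟩` of the cohomology ring `R_A` of a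
quasitoric manifold over a cube with characteristic data `A`. -/
noncomputable def quasiIdeal (n : ℕ) (A : Matrix (Fin n) (Fin n) ℤ) :
    Ideal (MvPolynomial (Fin n) ℤ) :=
  Ideal.span (Set.range fun j : Fin n => X j * ∑ i : Fin n, C (A j i) * X i)

/-- The principal minor of `A` on the index set `S`. -/
noncomputable def principalMinor (n : ℕ) (A : Matrix (Fin n) (Fin n) ℤ)
    (S : Finset (Fin n)) : ℤ :=
  (A.submatrix (fun i : {x // x ∈ S} => (i : Fin n)) fun j : {x // x ∈ S} => (j : Fin n)).det

/-! ### Auxiliary definitions and lemmas -/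

/-- The linear form `∑ i, b i • X i`. -/
noncomputable def linC {n : ℕ} (b : Fin n → ℤ) : MvPolynomial (Fin n) ℤ :=
  ∑ i, C (b i) * X i

/-- The twisting coefficients of the images of the Bott generators. -/
def wfun {n : ℕ} (ε : Fin n → Fin n → ℤ) (P : Fin n → Fin n → ℤ) (j : Fin n)
    (t : Fin n) : ℤ :=
  ∑ i, if i < j then ε j i * P i t else 0

lemma deg_add {n : ℕ} (a b : Fin n →₀ ℕ) : (a + b).degree = a.degree + b.degree := by
  simp [Finsupp.degree_eq_weight_one, map_add]

lemma linC_isHom {n : ℕ} (b : Fin n → ℤ) : (linC b).IsHomogeneous 1 := by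
  apply IsHomogeneous.sum
  intro i _
  simpa using (isHomogeneous_C (Fin n) (b i)).mul (isHomogeneous_X ℤ i)

lemma coeff_mul_hom2_deg1 {n : ℕ} (f g : MvPolynomial (Fin n) ℤ) (hg : g.IsHomogeneous 2)
    (m : Fin n →₀ ℕ) (hm : m.degree = 1) : coeff m (f * g) = 0 := by
  rw [coeff_mul]
  apply Finset.sum_eq_zero
  rintro ⟨a, b⟩ hab
  rw [Finset.HasAntidiagonal.mem_antidiagonal] at hab
  by_cases hb : coeff b g = 0
  · simp [hb]
  · have hbd : b.degree = 2 := by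
      by_contra h; exact hb (hg.coeff_eq_zero h)
    have := deg_add a b
    rw [hab, hm, hbd] at this
    omega

lemma coeff_mul_hom2_deg2 {n : ℕ} (f g : MvPolynomial (Fin n) ℤ) (hg : g.IsHomogeneous 2)
    (m : Fin n →₀ ℕ) (hm : m.degree = 2) :
    coeff m (f * g) = coeff 0 f * coeff m g := by
  rw [coeff_mul]
  rw [Finset.sum_eq_single ((0 : Fin n →₀ ℕ), m)]
  · rintro ⟨a, b⟩ hab hne
    rw [Finset.HasAntidiagonal.mem_antidiagonal] at hab
    by_cases hb : coeff b g = 0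
    · simp [hb]
    · have hbd : b.degree = 2 := by
        by_contra h; exact hb (hg.coeff_eq_zero h)
      have hda := deg_add a b
      rw [hab, hm, hbd] at hda
      have ha0 : a = 0 := by
        rw [← Finsupp.degree_eq_zero_iff]; omega
      subst ha0
      rw [zero_add] at hab
      exact absurd (by rw [Prod.mk.injEq]; exact ⟨rfl, hab⟩) hne
  · intro h
    exact absurd (Finset.HasAntidiagonal.mem_antidiagonal.mpr (zero_add m)) h

lemma deg_single {n : ℕ} (t : Fin n) : (Finsupp.single t 1).degree = 1 := by
  exact Finsupp.degree_single t 1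

lemma coeff_linC {n : ℕ} (b : Fin n → ℤ) (t : Fin n) :
    coeff (Finsupp.single t 1) (linC b) = b t := by
  rw [linC, coeff_sum]
  rw [Finset.sum_eq_single t]
  · rw [coeff_C_mul, coeff_X_same, mul_one]
  · intro i _ hne
    rw [coeff_C_mul, coeff_X', if_neg, mul_zero]
    simp [Finsupp.single_eq_single_iff, hne]
  · simp

lemma eval_linC {n : ℕ} (b : Fin n → ℤ) (x : Fin n → ℤ) :
    eval x (linC b) = ∑ i, b i * x i := by
  simp [linC]

lemma linC_ind {n : ℕ} (p : Fin n) :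
    linC (fun i => if i = p then (1 : ℤ) else 0) = X p := by
  rw [linC, Finset.sum_eq_single p]
  · simp
  · intro i _ hne; simp [hne]
  · simp

lemma linC_sub {n : ℕ} (b c : Fin n → ℤ) : linC (b - c) = linC b - linC c := by
  simp [linC, sub_mul, Finset.sum_sub_distrib]

lemma linC_comb {n : ℕ} (d : Fin n → ℤ) (P : Fin n → Fin n → ℤ) :
    (∑ j, C (d j) * linC (P j)) = linC (fun i => ∑ j, d j * P j i) := by
  have h1 : ∀ j : Fin n, C (d j) * linC (P j) = ∑ t, C (d j * P j t) * X t := by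
    intro j
    rw [linC, Finset.mul_sum]
    apply Finset.sum_congr rfl
    intro t _
    rw [← mul_assoc, ← C_mul]
  rw [Finset.sum_congr rfl (fun j _ => h1 j), Finset.sum_comm, linC]
  apply Finset.sum_congr rfl
  intro t _
  rw [map_sum C (fun j => d j * P j t) Finset.univ, Finset.sum_mul]
lemma quasi_gen_hom {n : ℕ} (A : Matrix (Fin n) (Fin n) ℤ) (k : Fin n) :
    (X k * linC (A k)).IsHomogeneous 2 := by
  simpa using (isHomogeneous_X ℤ k).mul (linC_isHom (A k))

lemma quasi_mem_lin {n : ℕ} {A : Matrix (Fin n) (Fin n) ℤ} {b : Fin n → ℤ}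
    (h : linC b ∈ quasiIdeal n A) : ∀ t, b t = 0 := by
  obtain ⟨f, hf⟩ := Ideal.mem_span_range_iff_exists_fun.mp h
  intro t
  have h2 : coeff (Finsupp.single t 1) (linC b) = b t := coeff_linC b t
  rw [← hf, coeff_sum] at h2
  rw [← h2]
  apply Finset.sum_eq_zero
  intro k _
  exact coeff_mul_hom2_deg1 _ _ (quasi_gen_hom A k) _ (deg_single t)

lemma quasi_mem_quad {n : ℕ} {A : Matrix (Fin n) (Fin n) ℤ} {F : MvPolynomial (Fin n) ℤ}
    (hF : F.IsHomogeneous 2) (h : F ∈ quasiIdeal n A) :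
    ∃ lam : Fin n → ℤ, F = ∑ k, C (lam k) * (X k * linC (A k)) := by
  obtain ⟨f, hf⟩ := Ideal.mem_span_range_iff_exists_fun.mp h
  refine ⟨fun k => coeff 0 (f k), ?_⟩
  apply MvPolynomial.ext
  intro m
  rw [coeff_sum]
  by_cases hm : m.degree = 2
  · rw [← hf, coeff_sum]
    apply Finset.sum_congr rfl
    intro k _
    have hgen : (X k * ∑ i : Fin n, C (A k i) * X i) = X k * linC (A k) := rfl
    rw [hgen, coeff_C_mul, coeff_mul_hom2_deg2 (f k) _ (quasi_gen_hom A k) m hm]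
  · rw [hF.coeff_eq_zero hm]
    apply Eq.symm
    apply Finset.sum_eq_zero
    intro k _
    rw [coeff_C_mul, (quasi_gen_hom A k).coeff_eq_zero hm, mul_zero]

lemma mk_C_mul {n : ℕ} (I : Ideal (MvPolynomial (Fin n) ℤ)) (a : ℤ)
    (f : MvPolynomial (Fin n) ℤ) :
    Ideal.Quotient.mk I (C a * f) = a • Ideal.Quotient.mk I f := by
  have h : (Ideal.Quotient.mk I) (C a) = ((a : ℤ) : MvPolynomial (Fin n) ℤ ⧸ I) := by
    rw [eq_intCast (C : ℤ →+* MvPolynomial (Fin n) ℤ) a, map_intCast]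
  rw [map_mul, h, zsmul_eq_mul]

/-- Indicator vector. -/
def delta {n : ℕ} (p : Fin n) : Fin n → ℤ := fun i => if i = p then 1 else 0

lemma sum_delta {n : ℕ} (b : Fin n → ℤ) (p : Fin n) : (∑ i, b i * delta p i) = b p := by
  simp [delta, mul_ite, Finset.sum_ite_eq']

lemma sum_delta2 {n : ℕ} (b : Fin n → ℤ) (p q : Fin n) :
    (∑ i, b i * (delta p i + delta q i)) = b p + b q := by
  have h : ∀ i, b i * (delta p i + delta q i) = b i * delta p i + b i * delta q i :=
    fun i => by ring
  rw [Finset.sum_congr rfl (fun i _ => h i), Finset.sum_add_distrib, sum_delta, sum_delta]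

lemma evalF_delta1 {n : ℕ} (b u : Fin n → ℤ) (p : Fin n) :
    eval (delta p) (linC b * linC u) = b p * u p := by
  rw [map_mul, eval_linC, eval_linC, sum_delta, sum_delta]

lemma evalF_delta2 {n : ℕ} (b u : Fin n → ℤ) (p q : Fin n) :
    eval (fun i => delta p i + delta q i) (linC b * linC u) = (b p + b q) * (u p + u q) := by
  rw [map_mul, eval_linC, eval_linC, sum_delta2, sum_delta2]

lemma evalG_delta1 {n : ℕ} (lam : Fin n → ℤ) (A : Matrix (Fin n) (Fin n) ℤ) (p : Fin n) :
    eval (delta p) (∑ k, C (lam k) * (X k * linC (A k))) = lam p * A p p := by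
  rw [map_sum]
  have h1 : ∀ k, eval (delta p) (C (lam k) * (X k * linC (A k)))
      = (lam k * A k p) * delta p k := by
    intro k
    rw [map_mul, map_mul, eval_C, eval_X, eval_linC, sum_delta]
    ring
  rw [Finset.sum_congr rfl (fun k _ => h1 k), sum_delta (fun k => lam k * A k p) p]

lemma evalG_delta2 {n : ℕ} (lam : Fin n → ℤ) (A : Matrix (Fin n) (Fin n) ℤ) (p q : Fin n) :
    eval (fun i => delta p i + delta q i) (∑ k, C (lam k) * (X k * linC (A k)))
      = lam p * (A p p + A p q) + lam q * (A q p + A q q) := by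
  rw [map_sum]
  have h1 : ∀ k, eval (fun i => delta p i + delta q i) (C (lam k) * (X k * linC (A k)))
      = (lam k * (A k p + A k q)) * delta p k + (lam k * (A k p + A k q)) * delta q k := by
    intro k
    rw [map_mul, map_mul, eval_C, eval_X, eval_linC, sum_delta2]
    ring
  rw [Finset.sum_congr rfl (fun k _ => h1 k), Finset.sum_add_distrib,
    sum_delta (fun k => lam k * (A k p + A k q)) p,
    sum_delta (fun k => lam k * (A k p + A k q)) q]

lemma exists_top {ι : Type} [DecidableEq ι] (r : ι → ι → Prop) (s : Finset ι)
    (hs : s.Nonempty) :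
    (∀ p ∈ s, ∀ q ∈ s, p ≠ q → r p q ∨ r q p) →
    (∀ p ∈ s, ∀ q ∈ s, ∀ t ∈ s, r p q → r q t → r p t) →
    ∃ m ∈ s, ∀ q ∈ s, q ≠ m → r q m := by
  induction hs using Finset.Nonempty.cons_induction with
  | singleton a => exact fun _ _ => ⟨a, Finset.mem_singleton_self a,
      fun q hq hne => absurd (Finset.mem_singleton.mp hq) hne⟩
  | cons a t hat ht ih =>
    intro htot htrans
    have hsub : ∀ x ∈ t, x ∈ Finset.cons a t hat := fun x hx => Finset.mem_cons_of_mem hx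
    obtain ⟨m, hm, hmax⟩ := ih
      (fun p hp q hq => htot p (hsub p hp) q (hsub q hq))
      (fun p hp q hq u hu => htrans p (hsub p hp) q (hsub q hq) u (hsub u hu))
    have ham : a ≠ m := fun h => hat (h ▸ hm)
    have hmem_a : a ∈ Finset.cons a t hat := Finset.mem_cons_self a t
    have hmem_m : m ∈ Finset.cons a t hat := hsub m hm
    rcases htot a hmem_a m hmem_m ham with ham' | hma'
    · -- r a m : m is still top
      refine ⟨m, hmem_m, fun q hq hne => ?_⟩
      rcases Finset.mem_cons.mp hq with h | h
      · exact h ▸ ham'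
      · exact hmax q h hne
    · -- r m a : a is top
      refine ⟨a, hmem_a, fun q hq hne => ?_⟩
      rcases Finset.mem_cons.mp hq with h | h
      · exact absurd h hne
      · by_cases hqm : q = m
        · exact hqm ▸ hma'
        · exact htrans q (hsub q h) m hmem_m a hmem_a (hmax q h hqm) hma'

lemma det_reduce {ι : Type} [Fintype ι] [DecidableEq ι] (A : Matrix ι ι ℤ) (m₀ : ι)
    (h1 : A m₀ m₀ = 1) (h0 : ∀ q, q ≠ m₀ → A m₀ q = 0) :
    A.det = (A.submatrix (fun p : {x : ι // x ≠ m₀} => (p : ι))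
      (fun q : {x : ι // x ≠ m₀} => (q : ι))).det := by
  classical
  rw [← Matrix.det_submatrix_equiv_self (Equiv.sumCompl (fun x => x = m₀)) A]
  haveI hU : Unique {x : ι // x = m₀} := ⟨⟨⟨m₀, rfl⟩⟩, by rintro ⟨x, rfl⟩; rfl⟩
  have hblock : A.submatrix (Equiv.sumCompl (fun x => x = m₀)) (Equiv.sumCompl (fun x => x = m₀)) = Matrix.fromBlocks
      (Matrix.of fun _ _ => 1) 0
      (Matrix.of fun (p : {x : ι // ¬ x = m₀}) (_ : {x : ι // x = m₀}) => A p.1 m₀)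
      (A.submatrix (fun p : {x : ι // ¬ x = m₀} => (p : ι))
        (fun q : {x : ι // ¬ x = m₀} => (q : ι))) := by
    ext i j
    rcases i with i | i <;> rcases j with j | j
    · simp only [Matrix.submatrix_apply, Matrix.fromBlocks_apply₁₁, Matrix.of_apply,
        Equiv.sumCompl_apply_inl]
      rw [i.2, j.2, h1]
    · simp only [Matrix.submatrix_apply, Matrix.fromBlocks_apply₁₂, Matrix.of_apply,
        Equiv.sumCompl_apply_inl, Equiv.sumCompl_apply_inr, Matrix.zero_apply]
      rw [i.2]; exact h0 j.1 j.2
    · simp only [Matrix.submatrix_apply, Matrix.fromBlocks_apply₂₁, Matrix.of_apply,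
        Equiv.sumCompl_apply_inl, Equiv.sumCompl_apply_inr]
      rw [j.2]
    · simp only [Matrix.submatrix_apply, Matrix.fromBlocks_apply₂₂, Matrix.of_apply,
        Equiv.sumCompl_apply_inr]
  rw [hblock, Matrix.det_fromBlocks_zero₁₂]
  have h11 : (Matrix.of fun (_ : {x : ι // x = m₀}) (_ : {x : ι // x = m₀}) => (1 : ℤ)).det = 1 := by
    rw [Matrix.det_unique]
    rfl
  rw [h11, one_mul]
lemma inj2 {ι : Type} {p q : ι} (h : p ≠ q) : Function.Injective ![p, q] := by
  intro a b hab
  fin_cases a <;> fin_cases b <;> simp_all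

lemma inj3 {ι : Type} {p q t : ι} (h1 : p ≠ q) (h2 : q ≠ t) (h3 : p ≠ t) :
    Function.Injective ![p, q, t] := by
  intro a b hab
  fin_cases a <;> fin_cases b <;> simp_all

lemma det2 {ι : Type} (A : Matrix ι ι ℤ) (p q : ι) :
    (A.submatrix ![p, q] ![p, q]).det = A p p * A q q - A p q * A q p := by
  rw [Matrix.det_fin_two]; simp

lemma det3 {ι : Type} (A : Matrix ι ι ℤ) (p q t : ι) :
    (A.submatrix ![p, q, t] ![p, q, t]).det =
      A p p * A q q * A t t - A p p * A q t * A t q - A p q * A q p * A t t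
      + A p q * A q t * A t p + A p t * A q p * A t q - A p t * A q q * A t p := by
  rw [Matrix.det_fin_three]; simp
lemma keyL (N : ℕ) : ∀ (ι : Type) [Fintype ι] [DecidableEq ι], Fintype.card ι ≤ N →
    ∀ (A : Matrix ι ι ℤ), (∀ j, A j j = 1) →
    (∀ (k : ℕ) (f : Fin k → ι), Function.Injective f →
      (A.submatrix f f).det = 1 ∨ (A.submatrix f f).det = -1) →
    ∀ (m : ℕ) (v : Fin m → ι → ℤ) (E : Fin m → Fin m → ℤ),
    (∀ p : ι, ∃ d : Fin m → ℤ, ∀ i : ι, (∑ j, d j * v j i) = (if i = p then 1 else 0)) →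
    (∀ j : Fin m, ∃ lam : ι → ℤ, ∀ p q : ι,
      v j p * (v j q - ∑ i, (if i < j then E j i * v i q else 0))
      + v j q * (v j p - ∑ i, (if i < j then E j i * v i p else 0))
      = lam p * A p q + lam q * A q p) →
    A.det = 1 := by
  induction N with
  | zero =>
    intro ι _ _ hcard A _ _ _ _ _ _ _
    haveI : IsEmpty ι := Fintype.card_eq_zero_iff.mp (Nat.le_zero.mp hcard)
    exact Matrix.det_isEmpty
  | succ N ih =>
    intro ι instF instD hcard A hdiag hminor m v E hspan hrel
    by_cases hempty : IsEmpty ι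
    · exact Matrix.det_isEmpty
    haveI hne : Nonempty ι := not_isEmpty_iff.mp hempty
    classical
    have hvne : ∃ j, v j ≠ 0 := by
      by_contra hc
      push_neg at hc
      obtain ⟨p⟩ := hne
      obtain ⟨d, hd⟩ := hspan p
      have h1 := hd p
      rw [if_pos rfl] at h1
      have h2 : (∑ j, d j * v j p) = 0 :=
        Finset.sum_eq_zero (fun j _ => by rw [hc j]; simp)
      rw [h2] at h1
      exact absurd h1.symm one_ne_zero
    obtain ⟨T, hTne, hT⟩ : ∃ T : Finset (Fin m), T.Nonempty ∧ ∀ i, i ∈ T ↔ v i ≠ 0 := by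
      obtain ⟨j, hj⟩ := hvne
      exact ⟨Finset.univ.filter (fun j => v j ≠ 0), ⟨j, by simp [hj]⟩, fun i => by simp⟩
    set j₀ : Fin m := T.min' hTne with hj₀def
    have hj₀ : v j₀ ≠ 0 := (hT j₀).mp (T.min'_mem hTne)
    have hlow : ∀ i : Fin m, i < j₀ → v i = 0 := by
      intro i hi
      by_contra hvi
      exact absurd (T.min'_le i ((hT i).mpr hvi)) (not_le.mpr hi)
    set c : ι → ℤ := v j₀ with hcdef
    obtain ⟨lam, hstar0⟩ := hrel j₀
    have hwzero : ∀ q : ι, (∑ i, (if i < j₀ then E j₀ i * v i q else 0)) = 0 := by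
      intro q
      apply Finset.sum_eq_zero
      intro i _
      by_cases hi : i < j₀
      · rw [if_pos hi, hlow i hi]; simp
      · rw [if_neg hi]
    have hlam : ∀ p, lam p = c p * c p := by
      intro p
      have h2 := hstar0 p p
      rw [hwzero, sub_zero, hdiag p] at h2
      linarith
    have hstar : ∀ p q : ι, 2 * (c p * c q) = c p ^ 2 * A p q + c q ^ 2 * A q p := by
      intro p q
      have h1 := hstar0 p q
      rw [hwzero, hwzero, sub_zero, sub_zero, hlam p, hlam q] at h1
      ring_nf at h1 ⊢
      linarith
    obtain ⟨s, hsne, hsmem⟩ : ∃ s : Finset ι, s.Nonempty ∧ ∀ i, i ∈ s ↔ c i ≠ 0 := by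
      obtain ⟨p, hp⟩ := Function.ne_iff.mp hj₀
      exact ⟨Finset.univ.filter (fun i => c i ≠ 0), ⟨p, by simpa using hp⟩, fun i => by simp⟩
    have hout : ∀ p, p ∈ s → ∀ q, q ∉ s → A p q = 0 := by
      intro p hp q hq
      have hcp : c p ≠ 0 := (hsmem p).mp hp
      have hcq : c q = 0 := by
        by_contra h
        exact hq ((hsmem q).mpr h)
      have h1 := hstar p q
      rw [hcq] at h1
      have h2 : c p ^ 2 * A p q = 0 := by linarith
      rcases mul_eq_zero.mp h2 with h | h
      · exact absurd ((pow_eq_zero_iff two_ne_zero).mp h) hcp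
      · exact h
    have hpair0 : ∀ p ∈ s, ∀ q ∈ s, p ≠ q → A p q * A q p = 0 := by
      intro p hp q hq hpq
      have hcp : c p ≠ 0 := (hsmem p).mp hp
      have hcq : c q ≠ 0 := (hsmem q).mp hq
      have hd2 := hminor 2 ![p, q] (inj2 hpq)
      rw [det2, hdiag p, hdiag q, one_mul] at hd2
      have hcases : A p q * A q p = 0 ∨ A p q * A q p = 2 := by omega
      rcases hcases with h | hab
      · exact h
      exfalso
      have hst := hstar p q
      have key : (A p q * c p - c q) ^ 2 + c q ^ 2 = 0 := by
        linear_combination (-(A p q)) * hst - (c q) ^ 2 * hab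
      have hq2 : 0 < c q ^ 2 := by positivity
      nlinarith [sq_nonneg (A p q * c p - c q)]
    have hnotboth : ∀ p ∈ s, ∀ q ∈ s, p ≠ q → ¬(A p q = 0 ∧ A q p = 0) := by
      rintro p hp q hq hpq ⟨h1, h2⟩
      have hcp : c p ≠ 0 := (hsmem p).mp hp
      have hcq : c q ≠ 0 := (hsmem q).mp hq
      have hst := hstar p q
      rw [h1, h2] at hst
      have : c p * c q = 0 := by linarith
      rcases mul_eq_zero.mp this with h | h
      · exact hcp h
      · exact hcq h
    have hedge : ∀ p ∈ s, ∀ q ∈ s, p ≠ q → A q p = 0 → A p q * c p = 2 * c q := by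
      intro p hp q hq hpq h0
      have hcp : c p ≠ 0 := (hsmem p).mp hp
      have hst := hstar p q
      rw [h0] at hst
      apply mul_right_cancel₀ hcp
      ring_nf
      ring_nf at hst
      linarith
    -- the relation
    have htot : ∀ p ∈ s, ∀ q ∈ s, p ≠ q → (A q p = 0) ∨ (A p q = 0) := by
      intro p hp q hq hpq
      rcases mul_eq_zero.mp (hpair0 p hp q hq hpq) with h | h
      · exact Or.inr h
      · exact Or.inl h
    have htrans : ∀ p ∈ s, ∀ q ∈ s, ∀ t ∈ s, A q p = 0 → A t q = 0 → A t p = 0 := by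
      intro p hp q hq t ht hpq hqt
      by_cases h1 : p = q
      · rw [h1] at hpq
        rw [hdiag q] at hpq
        exact absurd hpq one_ne_zero
      by_cases h2 : q = t
      · exfalso
        rw [h2, hdiag t] at hqt
        exact one_ne_zero hqt
      by_cases h3 : p = t
      · exfalso
        rw [← h3] at hqt
        exact hnotboth q hq p hp (Ne.symm h1) ⟨hpq, hqt⟩
      by_contra hntp
      have hpt : A p t = 0 := by
        rcases htot p hp t ht h3 with h | h
        · exfalso; exact hntp h
        · exact h
      have hcp : c p ≠ 0 := (hsmem p).mp hp
      have hcq : c q ≠ 0 := (hsmem q).mp hq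
      have hct : c t ≠ 0 := (hsmem t).mp ht
      have f1 : A p q * c p = 2 * c q := hedge p hp q hq h1 hpq
      have f2 : A q t * c q = 2 * c t := hedge q hq t ht h2 hqt
      have f3 : A t p * c t = 2 * c p := hedge t ht p hp (Ne.symm h3) hpt
      have hprod : A p q * A q t * A t p = 8 := by
        have hc : c p * c q * c t ≠ 0 := mul_ne_zero (mul_ne_zero hcp hcq) hct
        apply mul_right_cancel₀ hc
        calc A p q * A q t * A t p * (c p * c q * c t)
            = (A p q * c p) * ((A q t * c q) * (A t p * c t)) := by ring
          _ = (2 * c q) * ((2 * c t) * (2 * c p)) := by rw [f1, f2, f3]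
          _ = 8 * (c p * c q * c t) := by ring
      have hd3 := hminor 3 ![p, q, t] (inj3 h1 h2 h3)
      rw [det3, hdiag p, hdiag q, hdiag t, hpq, hqt, hpt, hprod] at hd3
      simp at hd3
    obtain ⟨m₀, hm₀s, hm₀max⟩ := exists_top (fun p q => A q p = 0) s hsne
      (fun p hp q hq hpq => htot p hp q hq hpq)
      (fun p hp q hq t ht => htrans p hp q hq t ht)
    have hrow : ∀ q, q ≠ m₀ → A m₀ q = 0 := by
      intro q hq
      by_cases hqs : q ∈ s
      · exact hm₀max q hqs hq
      · exact hout m₀ hm₀s q hqs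
    rw [det_reduce A m₀ (hdiag m₀) hrow]
    have hcard' : Fintype.card {x : ι // x ≠ m₀} ≤ N := by
      have hlt : Fintype.card {x : ι // x ≠ m₀} < Fintype.card ι :=
        Fintype.card_subtype_lt (x := m₀) (by simp)
      omega
    exact ih {x : ι // x ≠ m₀} hcard'
      (A.submatrix (fun p => (p : ι)) (fun q => (q : ι)))
      (fun j => hdiag _)
      (by
        intro k f hf
        rw [Matrix.submatrix_submatrix]
        exact hminor k _ (Subtype.val_injective.comp hf))
      m (fun j i => v j (i : ι)) E
      (by
        intro p
        obtain ⟨d, hd⟩ := hspan (p : ι)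
        refine ⟨d, fun i => ?_⟩
        rw [hd (i : ι)]
        simp [Subtype.ext_iff])
      (by
        intro j
        obtain ⟨lam', hl⟩ := hrel j
        exact ⟨fun i => lam' (i : ι), fun p q => hl (p : ι) (q : ι)⟩)
set_option maxHeartbeats 2000000
set_option synthInstance.maxHeartbeats 1000000

/-- If `A` is an integer matrix with unit diagonal all of whose principal minors are `±1`,
and `R_A` is isomorphic to a Bott ring by a ring isomorphism carrying the ℤ-span of the
degree-two generators onto the ℤ-span of the degree-two generators, then every principal
minor of `A` equals `1`. -/
theorem stmt10 (n : ℕ) (A : Matrix (Fin n) (Fin n) ℤ)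
    (hdiag : ∀ j, A j j = 1)
    (hminor : ∀ S : Finset (Fin n), principalMinor n A S = 1 ∨ principalMinor n A S = -1)
    (ε : Fin n → Fin n → ℤ)
    (hiso : ∃ ψ : (MvPolynomial (Fin n) ℤ ⧸ bottIdeal n ε) ≃+*
        (MvPolynomial (Fin n) ℤ ⧸ quasiIdeal n A),
      Submodule.map (ψ : (MvPolynomial (Fin n) ℤ ⧸ bottIdeal n ε) →+*
            (MvPolynomial (Fin n) ℤ ⧸ quasiIdeal n A)).toIntAlgHom.toLinearMap
          (Submodule.span ℤ
            (Set.range fun i : Fin n => Ideal.Quotient.mk (bottIdeal n ε) (X i))) =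
        Submodule.span ℤ
          (Set.range fun i : Fin n => Ideal.Quotient.mk (quasiIdeal n A) (X i))) :
    ∀ S : Finset (Fin n), principalMinor n A S = 1 := by
  classical
  obtain ⟨ψ, hmap⟩ := hiso
  -- Step 1: coordinates of the images of the Bott generators
  have hx : ∀ j : Fin n, ∃ P : Fin n → ℤ,
      ψ (Ideal.Quotient.mk (bottIdeal n ε) (X j))
        = Ideal.Quotient.mk (quasiIdeal n A) (linC P) := by
    intro j
    have h1 : ψ (Ideal.Quotient.mk (bottIdeal n ε) (X j)) ∈
        Submodule.span ℤ
          (Set.range fun i : Fin n => Ideal.Quotient.mk (quasiIdeal n A) (X i)) := by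
      rw [← hmap]
      exact Submodule.mem_map_of_mem (Submodule.subset_span ⟨j, rfl⟩)
    obtain ⟨P, hP⟩ := (Submodule.mem_span_range_iff_exists_fun ℤ).mp h1
    refine ⟨P, ?_⟩
    rw [← hP, linC, map_sum]
    exact Finset.sum_congr rfl
      (fun i _ => (mk_C_mul (quasiIdeal n A) (P i) (X i)).symm)
  choose P hP using hx
  -- Step 2: image of the twisting class
  have hbf : ∀ j : Fin n, ψ (Ideal.Quotient.mk (bottIdeal n ε) (bottF n ε j))
      = Ideal.Quotient.mk (quasiIdeal n A) (linC (wfun ε P j)) := by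
    intro j
    rw [bottF, map_sum, map_sum]
    have h1 : ∀ i : Fin n,
        ψ (Ideal.Quotient.mk (bottIdeal n ε) (if i < j then C (ε j i) * X i else 0))
        = Ideal.Quotient.mk (quasiIdeal n A)
            (C (if i < j then ε j i else 0) * linC (P i)) := by
      intro i
      split_ifs with h
      · rw [mk_C_mul, map_zsmul, hP i, ← mk_C_mul]
      · rw [map_zero, map_zero, map_zero, zero_mul, map_zero]
    rw [Finset.sum_congr rfl (fun i _ => h1 i), ← map_sum, linC_comb]
    congr 1
    congr 1
    funext t
    apply Finset.sum_congr rfl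
    intro i _
    rw [ite_mul, zero_mul]
  -- Step 3: the quadratic relations hold in the quasitoric ring
  have hQ : ∀ j : Fin n, linC (P j) * linC (P j - wfun ε P j) ∈ quasiIdeal n A := by
    intro j
    rw [← Ideal.Quotient.eq_zero_iff_mem]
    have hgen : Ideal.Quotient.mk (bottIdeal n ε) (X j * (X j - bottF n ε j)) = 0 :=
      Ideal.Quotient.eq_zero_iff_mem.mpr (Ideal.subset_span ⟨j, rfl⟩)
    have h2 : ψ (Ideal.Quotient.mk (bottIdeal n ε) (X j * (X j - bottF n ε j))) = 0 := by
      rw [hgen, map_zero]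
    rw [map_mul, map_sub, map_mul, map_sub, hP j, hbf j] at h2
    rw [linC_sub, map_mul, map_sub]
    exact h2
  -- Step 4: extract integer coefficient identities
  have hrelK : ∀ j : Fin n, ∃ lam : Fin n → ℤ, ∀ p q : Fin n,
      P j p * (P j q - wfun ε P j q) + P j q * (P j p - wfun ε P j p)
        = lam p * A p q + lam q * A q p := by
    intro j
    obtain ⟨lam, hEq⟩ := quasi_mem_quad
      (by simpa using (linC_isHom (P j)).mul (linC_isHom (P j - wfun ε P j))) (hQ j)
    refine ⟨lam, fun p q => ?_⟩
    have Hp := congrArg (eval (delta p)) hEq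
    have Hq := congrArg (eval (delta q)) hEq
    have Hpq := congrArg (eval (fun i => delta p i + delta q i)) hEq
    rw [evalF_delta1, evalG_delta1] at Hp Hq
    rw [evalF_delta2, evalG_delta2] at Hpq
    simp only [Pi.sub_apply] at Hp Hq Hpq
    rw [hdiag p] at Hp
    rw [hdiag q] at Hq
    rw [hdiag p, hdiag q] at Hpq
    linear_combination Hpq - Hp - Hq
  -- Step 5: the coordinate vectors span ℤ^n
  have hspanK : ∀ p : Fin n, ∃ d : Fin n → ℤ, ∀ i : Fin n,
      (∑ j, d j * P j i) = if i = p then 1 else 0 := by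
    intro p
    have h1 : Ideal.Quotient.mk (quasiIdeal n A) (X p) ∈
        Submodule.map (ψ : (MvPolynomial (Fin n) ℤ ⧸ bottIdeal n ε) →+*
            (MvPolynomial (Fin n) ℤ ⧸ quasiIdeal n A)).toIntAlgHom.toLinearMap
          (Submodule.span ℤ
            (Set.range fun i : Fin n => Ideal.Quotient.mk (bottIdeal n ε) (X i))) := by
      rw [hmap]
      exact Submodule.subset_span ⟨p, rfl⟩
    obtain ⟨b, hb, hψb0⟩ := Submodule.mem_map.mp h1
    have hψb : ψ b = Ideal.Quotient.mk (quasiIdeal n A) (X p) := hψb0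
    obtain ⟨d, hd⟩ := (Submodule.mem_span_range_iff_exists_fun ℤ).mp hb
    have h2 : Ideal.Quotient.mk (quasiIdeal n A) (linC (fun i => ∑ j, d j * P j i))
        = Ideal.Quotient.mk (quasiIdeal n A) (X p) := by
      rw [← hψb, ← hd, map_sum]
      rw [← linC_comb, map_sum]
      apply Finset.sum_congr rfl
      intro j _
      rw [map_zsmul, hP j, mk_C_mul]
    have h3 : linC ((fun i => ∑ j, d j * P j i) - (fun i => if i = p then 1 else 0))
        ∈ quasiIdeal n A := by
      rw [linC_sub, linC_ind]
      rw [← Ideal.Quotient.eq_zero_iff_mem, map_sub, h2, sub_self]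
    have h4 := quasi_mem_lin h3
    refine ⟨d, fun i => ?_⟩
    have h5 := h4 i
    simp only [Pi.sub_apply] at h5
    linarith
  -- Step 6: apply the combinatorial lemma to each principal minor
  intro S
  have happ := keyL (Fintype.card {x : Fin n // x ∈ S}) {x : Fin n // x ∈ S}
    (le_refl _)
    (A.submatrix (fun p : {x : Fin n // x ∈ S} => (p : Fin n))
      (fun q : {x : Fin n // x ∈ S} => (q : Fin n)))
    (fun j => hdiag _)
    (by
      intro k f hf
      rw [Matrix.submatrix_submatrix]
      have hg : Function.Injective
          ((fun p : {x : Fin n // x ∈ S} => (p : Fin n)) ∘ f) :=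
        Subtype.val_injective.comp hf
      set T : Finset (Fin n) :=
        Finset.image ((fun p : {x : Fin n // x ∈ S} => (p : Fin n)) ∘ f) Finset.univ with hT
      have hmemT : ∀ a : Fin k,
          ((fun p : {x : Fin n // x ∈ S} => (p : Fin n)) ∘ f) a ∈ T := by
        intro a
        rw [hT]
        exact Finset.mem_image_of_mem _ (Finset.mem_univ a)
      have hsurj : Function.Surjective
          (fun a : Fin k => (⟨((fun p : {x : Fin n // x ∈ S} => (p : Fin n)) ∘ f) a,
            hmemT a⟩ : {x : Fin n // x ∈ T})) := by
        rintro ⟨x, hx⟩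
        rw [hT] at hx
        obtain ⟨a, _, ha⟩ := Finset.mem_image.mp hx
        exact ⟨a, Subtype.ext ha⟩
      have hinj : Function.Injective
          (fun a : Fin k => (⟨((fun p : {x : Fin n // x ∈ S} => (p : Fin n)) ∘ f) a,
            hmemT a⟩ : {x : Fin n // x ∈ T})) := by
        intro a b hab
        exact hg (by simpa [Subtype.mk.injEq] using hab)
      have he : Matrix.submatrix A
          ((fun p : {x : Fin n // x ∈ S} => (p : Fin n)) ∘ f)
          ((fun p : {x : Fin n // x ∈ S} => (p : Fin n)) ∘ f)
          = (Matrix.submatrix A (fun i : {x : Fin n // x ∈ T} => (i : Fin n))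
              (fun i : {x : Fin n // x ∈ T} => (i : Fin n))).submatrix
            (Equiv.ofBijective _ ⟨hinj, hsurj⟩) (Equiv.ofBijective _ ⟨hinj, hsurj⟩) := by
        ext a b
        rfl
      rw [he, Matrix.det_submatrix_equiv_self]
      exact hminor T)
    n (fun j (i : {x : Fin n // x ∈ S}) => P j (i : Fin n)) ε
    (by
      intro p
      obtain ⟨d, hd⟩ := hspanK (p : Fin n)
      refine ⟨d, fun i => ?_⟩
      rw [hd (i : Fin n)]
      by_cases h : i = p
      · rw [if_pos (congrArg Subtype.val h), if_pos h]
      · rw [if_neg (fun h' => h (Subtype.ext h')), if_neg h])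
    (by
      intro j
      obtain ⟨lam, hl⟩ := hrelK j
      exact ⟨fun i => lam (i : Fin n), fun p q => hl (p : Fin n) (q : Fin n)⟩)
  rw [principalMinor]
  exact happ
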